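/- Let n ≥ 3 and let m be a positive integer with m > n^{π(n)}. Then the binomial coefficient C(m+n, n) admits a Grimm factorization; in particular, C(m+n, n) has at least n distinct prime factors. -/

import Mathlib

open Finset Nat

/-- division of a sum -/
private lemma es_div_add (m n q : ℕ) (hq : 0 < q) :
    m / q + n / q ≤ (m + n) / q ∧ (m + n) / q ≤ m / q + n / q + 1 := by
  constructor
  · exact Nat.add_div_le_add_div m n q
  · rw [Nat.add_div hq]
    split <;> omega

private lemma es_count_eq (m n q : ℕ) (hq : 0 < q) :
    #{i ∈ Icc 1 n | q ∣ m + i} + m / q = (m + n) / q := by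
  have h1 : #{i ∈ Icc 1 n | q ∣ m + i} = #{x ∈ Ioc m (m + n) | q ∣ x} := by
    have hmap : (Icc 1 n).map (addLeftEmbedding m) = Ioc m (m + n) := by
      rw [map_add_left_Icc, Finset.Icc_add_one_left_eq_Ioc]
    rw [← hmap, Finset.filter_map, Finset.card_map]
    congr 1
  have h2 : #{x ∈ Ioc 0 m | q ∣ x} + #{x ∈ Ioc m (m + n) | q ∣ x}
      = #{x ∈ Ioc 0 (m + n) | q ∣ x} := by
    rw [← Finset.card_union_of_disjoint]
    · rw [← Finset.filter_union, Finset.Ioc_union_Ioc_eq_Ioc (Nat.zero_le m) (Nat.le_add_right m n)]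
    · exact Finset.disjoint_filter_filter (by simp [Finset.disjoint_left]; omega)
  rw [Nat.Ioc_filter_dvd_card_eq_div, Nat.Ioc_filter_dvd_card_eq_div] at h2
  omega

private lemma es_fact_eq_card {p x B : ℕ} (hp : p.Prime) (hx : x ≠ 0)
    (hB : x.factorization p < B) :
    x.factorization p = #{k ∈ Ico 1 B | p ^ k ∣ x} := by
  have : {k ∈ Ico 1 B | p ^ k ∣ x} = Icc 1 (x.factorization p) := by
    ext k
    simp only [mem_filter, mem_Ico, mem_Icc, hp.pow_dvd_iff_le_factorization hx]
    omega
  rw [this, Nat.card_Icc]; omega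

private lemma es_legendre {p n B : ℕ} (hp : p.Prime) (hB : Nat.log p n < B) :
    (n !).factorization p = ∑ k ∈ Ico 1 B, n / p ^ k := by
  haveI : Fact p.Prime := ⟨hp⟩
  rw [Nat.factorization_def _ hp, padicValNat_factorial hB]

private lemma es_prod_id (m n : ℕ) :
    (m + n).choose n * n ! = ∏ i ∈ Icc 1 n, (m + i) := by
  induction n with
  | zero => simp
  | succ n ih =>
    rw [Finset.prod_Icc_succ_top (by omega)]
    have h : (m + n + 1) * (m + n).choose n = (m + n + 1).choose (n + 1) * (n + 1) := by
      simpa [Nat.succ_eq_add_one] using Nat.add_one_mul_choose_eq (m + n) n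
    have e1 : m + (n + 1) = m + n + 1 := by omega
    rw [e1]
    calc (m + n + 1).choose (n + 1) * (n + 1)!
        = ((m + n + 1).choose (n + 1) * (n + 1)) * n ! := by
          rw [Nat.factorial_succ]; ring
      _ = ((m + n + 1) * (m + n).choose n) * n ! := by rw [← h]
      _ = (∏ i ∈ Icc 1 n, (m + i)) * (m + n + 1) := by rw [← ih]; ring

private lemma es_fact_sum {m n : ℕ} (hm : 0 < m) (p : ℕ) :
    ((m + n).choose n).factorization p + (n !).factorization p
      = ∑ i ∈ Icc 1 n, (m + i).factorization p := by
  have hC : (m + n).choose n ≠ 0 := Nat.pos_iff_ne_zero.mp (Nat.choose_pos (Nat.le_add_left n m))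
  have h := es_prod_id m n
  have := congrArg Nat.factorization h
  rw [Nat.factorization_mul hC (Nat.factorial_ne_zero n),
    Nat.factorization_prod (fun i _ => by omega)] at this
  have h2 : (((m + n).choose n).factorization + (n !).factorization) p
      = (∑ x ∈ Icc 1 n, (m + x).factorization) p := by rw [this]
  simpa [Finset.sum_apply'] using h2

private lemma es_exists_big {n x : ℕ} (hn : 1 ≤ n) (hx : n ^ n.primeCounting < x) :
    ∃ p, p.Prime ∧ n < p ^ x.factorization p := by
  by_contra hc
  push_neg at hc
  have hx0 : x ≠ 0 := by omega
  have hpi : n.primeCounting = #{p ∈ range (n + 1) | p.Prime} := by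
    rw [Nat.primeCounting, Nat.primeCounting', Nat.count_eq_card_filter_range]
  have hsub : x.primeFactors ⊆ {p ∈ range (n + 1) | p.Prime} := by
    intro p hp
    have hpp := Nat.prime_of_mem_primeFactors hp
    have hv : 1 ≤ x.factorization p :=
      hpp.factorization_pos_of_dvd hx0 (Nat.dvd_of_mem_primeFactors hp)
    have h1 : p ≤ p ^ x.factorization p := Nat.le_self_pow (by omega) p
    have h2 := hc p hpp
    simp only [Finset.mem_filter, Finset.mem_range]
    exact ⟨by omega, hpp⟩
  have hcard : x.primeFactors.card ≤ n.primeCounting := by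
    rw [hpi]; exact Finset.card_le_card hsub
  have hle : x ≤ n ^ n.primeCounting := by
    calc x = ∏ p ∈ x.primeFactors, p ^ x.factorization p := by
          conv_lhs => rw [← Nat.factorization_prod_pow_eq_self hx0]
          rw [Finsupp.prod, Nat.support_factorization]
      _ ≤ ∏ p ∈ x.primeFactors, n := Finset.prod_le_prod' fun p hp =>
          hc p (Nat.prime_of_mem_primeFactors hp)
      _ = n ^ x.primeFactors.card := by rw [Finset.prod_const]
      _ ≤ n ^ n.primeCounting := Nat.pow_le_pow_right hn hcard
  omega

private lemma es_upper {m n p : ℕ} (hm : 0 < m) (hp : p.Prime) {istar : ℕ}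
    (hi : istar ∈ Icc 1 n)
    (hmax : ∀ j ∈ Icc 1 n, (m + j).factorization p ≤ (m + istar).factorization p) :
    ((m + n).choose n).factorization p ≤ (m + istar).factorization p := by
  set e := (m + istar).factorization p with he
  set B := max e (Nat.log p n) + 1 with hB
  have hsum := es_fact_sum (n := n) hm p
  have hkey : ∑ j ∈ (Icc 1 n).erase istar, (m + j).factorization p
      ≤ (n !).factorization p := by
    have hcount : ∀ j ∈ (Icc 1 n).erase istar,
        (m + j).factorization p = #{k ∈ Ico 1 B | p ^ k ∣ m + j} := fun j hj =>
      es_fact_eq_card hp (by omega)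
        (lt_of_le_of_lt (hmax j (Finset.mem_of_mem_erase hj)) (by omega))
    rw [Finset.sum_congr rfl hcount]
    have hex : ∑ j ∈ (Icc 1 n).erase istar, #{k ∈ Ico 1 B | p ^ k ∣ m + j}
        = ∑ k ∈ Ico 1 B, #{j ∈ (Icc 1 n).erase istar | p ^ k ∣ m + j} := by
      simp_rw [Finset.card_filter]
      rw [Finset.sum_comm]
    rw [hex, es_legendre hp (show Nat.log p n < B by omega)]
    apply Finset.sum_le_sum
    intro k hk
    simp only [mem_Ico] at hk
    by_cases hke : k ≤ e
    · have hdvd : p ^ k ∣ m + istar :=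
        (hp.pow_dvd_iff_le_factorization (by omega)).mpr (by omega)
      rw [Finset.filter_erase]
      have h2 : istar ∈ {j ∈ Icc 1 n | p ^ k ∣ m + j} := Finset.mem_filter.mpr ⟨hi, hdvd⟩
      have h3 := es_count_eq m n (p ^ k) (pow_pos hp.pos k)
      have h4 := (es_div_add m n (p ^ k) (pow_pos hp.pos k)).2
      have h5 := Finset.card_erase_of_mem h2
      generalize hX : (m + n) / p ^ k = X at h3 h4
      generalize hY : m / p ^ k = Y at h3 h4
      generalize hZ : n / p ^ k = Z at h4 ⊢
      omega
    · have hempty : {j ∈ (Icc 1 n).erase istar | p ^ k ∣ m + j} = ∅ := by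
        apply Finset.filter_eq_empty_iff.mpr
        intro j hj hdvd
        have h6 := (hp.pow_dvd_iff_le_factorization (n := m + j) (by omega)).mp hdvd
        have h7 := hmax j (Finset.mem_of_mem_erase hj)
        omega
      rw [hempty]; simp
  have hsplit : ∑ i ∈ Icc 1 n, (m + i).factorization p
      = (m + istar).factorization p
        + ∑ j ∈ (Icc 1 n).erase istar, (m + j).factorization p :=
    (Finset.add_sum_erase _ _ hi).symm
  omega

private lemma es_lower {m n p i : ℕ} (hm : 0 < m) (hp : p.Prime)
    (hi : i ∈ Icc 1 n) (hbig : n < p ^ ((m + i).factorization p)) :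
    (∀ j ∈ Icc 1 n, j ≠ i → (m + j).factorization p < (m + i).factorization p) ∧
      1 ≤ ((m + n).choose n).factorization p := by
  set e := (m + i).factorization p with he
  have hi' := Finset.mem_Icc.mp hi
  have he1 : 1 ≤ e := by
    rcases Nat.eq_zero_or_pos e with h0 | h
    · rw [h0, pow_zero] at hbig; omega
    · exact h
  have hdi : p ^ e ∣ m + i := Nat.ordProj_dvd _ _
  have part1 : ∀ j ∈ Icc 1 n, j ≠ i → (m + j).factorization p < e := by
    intro j hj hne
    by_contra hc
    push_neg at hc
    have hdj : p ^ e ∣ m + j := (hp.pow_dvd_iff_le_factorization (by omega)).mpr hc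
    have hj' := Finset.mem_Icc.mp hj
    rcases Nat.lt_or_ge j i with hlt | hge
    · have hsub : p ^ e ∣ i - j := by
        have h8 := Nat.dvd_sub hdi hdj
        simpa [show (m + i) - (m + j) = i - j by omega] using h8
      have hle := Nat.le_of_dvd (by omega) hsub
      omega
    · have hgt : j > i := by omega
      have hsub : p ^ e ∣ j - i := by
        have h8 := Nat.dvd_sub hdj hdi
        simpa [show (m + j) - (m + i) = j - i by omega] using h8
      have hle := Nat.le_of_dvd (by omega) hsub
      omega
  refine ⟨part1, ?_⟩
  set B := max e (Nat.log p n) + 1 with hB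
  have hsum := es_fact_sum (n := n) hm p
  have hleg := es_legendre (n := n) hp (show Nat.log p n < B by omega)
  have hco : ∀ j ∈ Icc 1 n, (m + j).factorization p = #{k ∈ Ico 1 B | p ^ k ∣ m + j} := by
    intro j hj
    apply es_fact_eq_card hp (by omega)
    rcases eq_or_ne j i with rfl | hne
    · omega
    · have h9 := part1 j hj hne; omega
  have hex : ∑ j ∈ Icc 1 n, (m + j).factorization p
      = ∑ k ∈ Ico 1 B, #{j ∈ Icc 1 n | p ^ k ∣ m + j} := by
    rw [Finset.sum_congr rfl hco]
    simp_rw [Finset.card_filter]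
    rw [Finset.sum_comm]
  have hlt : ∑ k ∈ Ico 1 B, n / p ^ k < ∑ k ∈ Ico 1 B, #{j ∈ Icc 1 n | p ^ k ∣ m + j} := by
    apply Finset.sum_lt_sum
    · intro k hk
      have h3 := es_count_eq m n (p ^ k) (pow_pos hp.pos k)
      have h4 := (es_div_add m n (p ^ k) (pow_pos hp.pos k)).1
      generalize hX : (m + n) / p ^ k = X at h3 h4
      generalize hY : m / p ^ k = Y at h3 h4
      generalize hZ : n / p ^ k = Z at h4 ⊢
      omega
    · refine ⟨e, by simp only [mem_Ico]; omega, ?_⟩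
      have hne : n / p ^ e = 0 := Nat.div_eq_of_lt hbig
      have hmem : i ∈ {j ∈ Icc 1 n | p ^ e ∣ m + j} := Finset.mem_filter.mpr ⟨hi, hdi⟩
      have h10 := Finset.card_pos.mpr ⟨i, hmem⟩
      rw [hne]
      exact h10
  omega

/-- Erdős–Selfridge bound: if `n ≥ 3` and `m > n^π(n)`, then `C(m+n, n)` admits a
Grimm factorization; in particular it has at least `n` distinct prime factors. -/
theorem grimm_factorization_of_gt_pow_primeCounting
    (m n : ℕ) (hm : 0 < m) (hn : 3 ≤ n)
    (h : m > n ^ Nat.primeCounting n) :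
    (∃ a : ℕ → ℕ,
      Nat.choose (m + n) n = ∏ i ∈ Finset.Icc 1 n, a i ∧
      (∀ i ∈ Finset.Icc 1 n, a i ∣ (m + i) ∧ 1 < a i) ∧
      (∀ i ∈ Finset.Icc 1 n, ∀ j ∈ Finset.Icc 1 n, i ≠ j →
        Nat.Coprime (a i) (a j))) ∧
    n ≤ (Nat.choose (m + n) n).primeFactors.card := by
  set C := (m + n).choose n with hCdef
  have hC0 : C ≠ 0 := Nat.pos_iff_ne_zero.mp (Nat.choose_pos (Nat.le_add_left n m))
  have hne : (Finset.Icc 1 n).Nonempty := ⟨1, by simp; omega⟩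
  have hmaxex : ∀ p : ℕ, ∃ i ∈ Icc 1 n, ∀ j ∈ Icc 1 n,
      (m + j).factorization p ≤ (m + i).factorization p :=
    fun p => Finset.exists_max_image (Icc 1 n) (fun i => (m + i).factorization p) hne
  choose f hf1 hf2 using hmaxex
  set a : ℕ → ℕ :=
    fun i => ∏ p ∈ C.primeFactors.filter (fun p => f p = i), p ^ C.factorization p with ha
  have hwit : ∀ i ∈ Icc 1 n, ∃ p, p.Prime ∧ p ∈ C.primeFactors ∧ f p = i := by
    intro i hi
    have hii := Finset.mem_Icc.mp hi
    obtain ⟨p, hp, hbig⟩ := es_exists_big (n := n) (by omega) (x := m + i) (by omega)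
    have hlow := es_lower hm hp hi hbig
    have hpC : p ∈ C.primeFactors := by
      rw [Nat.mem_primeFactors]
      refine ⟨hp, ?_, hC0⟩
      have h1 : 1 ≤ C.factorization p := hlow.2
      exact Nat.dvd_of_factorization_pos (by omega)
    have hfp : f p = i := by
      by_contra hne'
      have h1 := hlow.1 (f p) (hf1 p) hne'
      have h2 := hf2 p i hi
      omega
    exact ⟨p, hp, hpC, hfp⟩
  have htermne : ∀ i : ℕ, ∀ p ∈ C.primeFactors.filter (fun p => f p = i),
      p ^ C.factorization p ≠ 0 := fun i p hp =>
    pow_ne_zero _ (Nat.prime_of_mem_primeFactors (Finset.mem_filter.mp hp).1).ne_zero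
  have hai0 : ∀ i, a i ≠ 0 := fun i => Finset.prod_ne_zero_iff.mpr (htermne i)
  have key1 : C = ∏ i ∈ Icc 1 n, a i := by
    rw [ha]
    rw [Finset.prod_fiberwise_of_maps_to (fun p _ => hf1 p)
      (fun p => p ^ C.factorization p)]
    conv_lhs => rw [← Nat.factorization_prod_pow_eq_self hC0]
    rw [Finsupp.prod, Nat.support_factorization]
  have key2 : ∀ i ∈ Icc 1 n, a i ∣ m + i := by
    intro i hi
    have hmi : m + i ≠ 0 := by omega
    rw [← Nat.factorization_le_iff_dvd (hai0 i) hmi, Finsupp.le_def]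
    intro q
    rw [ha]
    rw [Nat.factorization_prod (htermne i), Finset.sum_apply']
    have hterm : ∀ p ∈ C.primeFactors.filter (fun p => f p = i),
        (p ^ C.factorization p).factorization q
          = if p = q then C.factorization q else 0 := by
      intro p hp
      have hpp := Nat.prime_of_mem_primeFactors (Finset.mem_filter.mp hp).1
      rw [hpp.factorization_pow, Finsupp.single_apply]
      split
      · rename_i hh; rw [hh]
      · rfl
    rw [Finset.sum_congr rfl hterm, Finset.sum_ite_eq' _ q _]
    split
    · rename_i hq
      rcases Finset.mem_filter.mp hq with ⟨hqC, hfq⟩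
      have hqp := Nat.prime_of_mem_primeFactors hqC
      have hup := es_upper hm hqp (hf1 q) (hf2 q)
      rw [hfq] at hup
      exact hup
    · exact Nat.zero_le _
  have key3 : ∀ i ∈ Icc 1 n, 1 < a i := by
    intro i hi
    obtain ⟨p, hp, hpC, hfp⟩ := hwit i hi
    have hmem : p ∈ C.primeFactors.filter (fun p => f p = i) :=
      Finset.mem_filter.mpr ⟨hpC, hfp⟩
    have hv : 1 ≤ C.factorization p :=
      hp.factorization_pos_of_dvd hC0 (Nat.dvd_of_mem_primeFactors hpC)
    calc 1 < p ^ C.factorization p := Nat.one_lt_pow (by omega) hp.one_lt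
      _ ≤ a i := Finset.single_le_prod' (fun q hq =>
          Nat.one_le_iff_ne_zero.mpr (htermne i q hq)) hmem
  have key4 : ∀ i ∈ Icc 1 n, ∀ j ∈ Icc 1 n, i ≠ j → Nat.Coprime (a i) (a j) := by
    intro i _ j _ hij
    apply Nat.Coprime.prod_left
    intro p hp
    apply Nat.Coprime.prod_right
    intro q hq
    rcases Finset.mem_filter.mp hp with ⟨hpC, hfp⟩
    rcases Finset.mem_filter.mp hq with ⟨hqC, hfq⟩
    have hpq : p ≠ q := by rintro rfl; rw [hfp] at hfq; exact hij hfq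
    exact Nat.Coprime.pow _ _ ((Nat.coprime_primes (Nat.prime_of_mem_primeFactors hpC)
      (Nat.prime_of_mem_primeFactors hqC)).mpr hpq)
  have key5 : n ≤ C.primeFactors.card := by
    have hsub : Icc 1 n ⊆ Finset.image f C.primeFactors := by
      intro i hi
      obtain ⟨p, _, hpC, hfp⟩ := hwit i hi
      exact Finset.mem_image.mpr ⟨p, hpC, hfp⟩
    calc n = (Icc 1 n).card := by rw [Nat.card_Icc]; omega
      _ ≤ (Finset.image f C.primeFactors).card := Finset.card_le_card hsub
      _ ≤ C.primeFactors.card := Finset.card_image_le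
  exact ⟨⟨a, key1, fun i hi => ⟨key2 i hi, key3 i hi⟩, key4⟩, key5⟩
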